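/- The partial order (𝒫, ⊇*) is σ-directed closed: for every countable subset D ⊆ 𝒫 that is directed under ⊇* (any two elements of D have a common mod-finite extension in D), there is p ∈ 𝒫 with p ⊇* q for every q ∈ D. -/

import Mathlib

open Set Topology Filter

noncomputable section

/-- Velickovic's poset `𝒫`: conditions are (graphs of) injective partial involutions
`p` of `ℕ` without fixed points, with `dom p = ran p`, respecting the intervals
`[2^n, 2^{n+1})`, and with `limsup_n |[2^n,2^{n+1}) ∖ dom p| = ∞`. -/
structure VelCond where
  graph : Set (ℕ × ℕ)
  func : ∀ ⦃i j k : ℕ⦄, (i, j) ∈ graph → (i, k) ∈ graph → j = k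
  dom_eq_ran : Prod.fst '' graph = Prod.snd '' graph
  blocks : ∀ ⦃i j : ℕ⦄, (i, j) ∈ graph → ∀ n : ℕ,
    (i ∈ Set.Ico (2 ^ n) (2 ^ (n + 1)) ↔ j ∈ Set.Ico (2 ^ n) (2 ^ (n + 1)))
  invol : ∀ ⦃i j : ℕ⦄, (i, j) ∈ graph → (j, i) ∈ graph ∧ i ≠ j
  growth : ∀ k : ℕ,
    {n : ℕ | k ≤ (Set.Ico (2 ^ n) (2 ^ (n + 1)) \ (Prod.fst '' graph)).ncard}.Infinite

/-- `q ⊇* p`: `q` extends `p` mod finite (all but finitely many pairs of `p` are in `q`). -/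
def SupStar (q p : VelCond) : Prop := (p.graph \ q.graph).Finite


namespace VelAux

lemma supStar_refl (p : VelCond) : SupStar p p := by
  simp [SupStar]

lemma supStar_trans {p r q : VelCond} (h1 : SupStar p r) (h2 : SupStar r q) : SupStar p q := by
  refine (h2.union h1).subset ?_
  intro x hx
  by_cases hr : x ∈ r.graph
  · exact Or.inr ⟨hr, hx.2⟩
  · exact Or.inl ⟨hx.1, hr⟩

lemma pos_of_mem {q : VelCond} {a b : ℕ} (h : (a, b) ∈ q.graph) : 0 < a := by
  rcases Nat.eq_zero_or_pos a with ha | ha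
  swap
  · exact ha
  subst ha
  have hb : b ≠ 0 := fun hb => (q.invol h).2 (by simp [hb])
  have hbmem : b ∈ Set.Ico (2 ^ Nat.log 2 b) (2 ^ (Nat.log 2 b + 1)) :=
    ⟨Nat.pow_log_le_self 2 hb, Nat.lt_pow_succ_log_self one_lt_two b⟩
  have := ((q.blocks h (Nat.log 2 b)).2 hbmem).1
  simp at this

lemma mem_block {a : ℕ} (ha : 0 < a) :
    a ∈ Set.Ico (2 ^ Nat.log 2 a) (2 ^ (Nat.log 2 a + 1)) :=
  ⟨Nat.pow_log_le_self 2 ha.ne', Nat.lt_pow_succ_log_self one_lt_two a⟩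

lemma log_det {a n : ℕ} (h : a ∈ Set.Ico (2 ^ n) (2 ^ (n + 1))) : Nat.log 2 a = n :=
  Nat.log_eq_of_pow_le_of_lt_pow h.1 h.2

lemma log_eq {q : VelCond} {a b : ℕ} (h : (a, b) ∈ q.graph) : Nat.log 2 b = Nat.log 2 a := by
  have ha := pos_of_mem h
  exact log_det ((q.blocks h (Nat.log 2 a)).1 (mem_block ha))

/-- generic recursive choice -/
lemma exists_seq {α : Type*} (P : ℕ → α → α → Prop) (a0 : α)
    (h : ∀ n a, ∃ b, P n a b) :
    ∃ f : ℕ → α, f 0 = a0 ∧ ∀ n, P n (f n) (f (n + 1)) := by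
  choose g hg using h
  exact ⟨fun n => Nat.rec a0 (fun n x => g n x) n, rfl, fun n => hg n _⟩

lemma fin_of_fst_lt {q : VelCond} (N : ℕ) :
    {x ∈ q.graph | x.1 < N}.Finite := by
  have himg : (Prod.fst '' {x ∈ q.graph | x.1 < N}).Finite :=
    (Set.finite_Iio N).subset (by rintro a ⟨x, ⟨-, hx⟩, rfl⟩; exact hx)
  refine Set.Finite.of_finite_image himg ?_
  rintro ⟨a, b⟩ ⟨hb, -⟩ ⟨a', b'⟩ ⟨hb', -⟩ (h : a = a')
  subst h
  simp [q.func hb hb']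

end VelAux

namespace VelAux

variable (r : ℕ → VelCond) (m : ℕ → ℕ)

/-- the index of the chain element used on block `n` -/
def J (n : ℕ) : ℕ := Nat.findGreatest (fun j => m j ≤ n) n

/-- the fusion of the chain `r` along the blocks determined by `m` -/
def fuse : Set (ℕ × ℕ) :=
  {x | m 0 ≤ Nat.log 2 x.1 ∧ x ∈ (r (J m (Nat.log 2 x.1))).graph}

variable {m} (hm : StrictMono m)

include hm

lemma J_mJ (j : ℕ) : J m (m j) = j := by
  refine le_antisymm ?_ (Nat.le_findGreatest hm.le_apply le_rfl)
  by_contra h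
  push_neg at h
  have hspec : m (J m (m j)) ≤ m j :=
    Nat.findGreatest_spec (P := fun t => m t ≤ m j) hm.le_apply le_rfl
  exact absurd hspec (by simpa using (hm h).not_ge)

omit hm in
lemma mJ_le {n : ℕ} (h0 : m 0 ≤ n) : m (J m n) ≤ n :=
  Nat.findGreatest_spec (P := fun t => m t ≤ n) (Nat.zero_le n) h0

omit hm

lemma fuse_invol {i j : ℕ} (h : (i, j) ∈ fuse r m) : (j, i) ∈ fuse r m ∧ i ≠ j := by
  obtain ⟨h0, hmem⟩ := h
  have hlog : Nat.log 2 j = Nat.log 2 i := log_eq hmem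
  have hi := (r _).invol hmem
  refine ⟨⟨?_, ?_⟩, hi.2⟩
  · simpa [hlog] using h0
  · show (j, i) ∈ (r (J m (Nat.log 2 j))).graph
    rw [hlog]
    exact hi.1

include hm

lemma fuse_growth
    (hcard : ∀ j, j ≤ (Set.Ico (2 ^ m j) (2 ^ (m j + 1)) \ (Prod.fst '' (r j).graph)).ncard)
    (k : ℕ) :
    {n : ℕ | k ≤ (Set.Ico (2 ^ n) (2 ^ (n + 1)) \ (Prod.fst '' fuse r m)).ncard}.Infinite := by
  refine (((Set.Ici_infinite k).image (hm.injective.injOn)).mono ?_)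
  rintro _ ⟨j, hj, rfl⟩
  show k ≤ (Set.Ico (2 ^ m j) (2 ^ (m j + 1)) \ (Prod.fst '' fuse r m)).ncard
  refine le_trans (le_trans hj (hcard j)) (Set.ncard_le_ncard ?_ ((Set.finite_Ico _ _).diff))
  rintro a ⟨haB, har⟩
  refine ⟨haB, fun himg => har ?_⟩
  obtain ⟨x, hx, hxa⟩ := himg
  refine ⟨x, ?_, hxa⟩
  have hlog : Nat.log 2 x.1 = m j := by rw [hxa]; exact log_det haB
  have := hx.2
  rwa [hlog, J_mJ hm] at this

lemma supStar_fuse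
    (hdiff : ∀ j, ∀ i < j, ∀ x ∈ (r i).graph \ (r j).graph, x.1 < 2 ^ m j)
    (i : ℕ) : ((r i).graph \ fuse r m).Finite := by
  refine (fin_of_fst_lt (q := r i) (2 ^ m i)).subset ?_
  rintro x ⟨hx, hnf⟩
  refine ⟨hx, ?_⟩
  by_contra hge
  push_neg at hge
  apply hnf
  have hx1 : x.1 ≠ 0 := by
    have : (0:ℕ) < 2 ^ m i := Nat.pow_pos (by norm_num)
    omega
  have hmi_le : m i ≤ Nat.log 2 x.1 := (Nat.le_log_iff_pow_le one_lt_two hx1).2 hge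
  have h0 : m 0 ≤ Nat.log 2 x.1 := le_trans (hm.monotone (Nat.zero_le i)) hmi_le
  refine ⟨h0, ?_⟩
  have hij : i ≤ J m (Nat.log 2 x.1) :=
    Nat.le_findGreatest (le_trans hm.le_apply hmi_le) hmi_le
  rcases hij.lt_or_eq with hlt | heq
  · by_contra hτ
    have hxlt := hdiff _ i hlt x ⟨hx, hτ⟩
    have hmj : m (J m (Nat.log 2 x.1)) ≤ Nat.log 2 x.1 := mJ_le h0
    have h1 : (2:ℕ) ^ Nat.log 2 x.1 ≤ x.1 := Nat.pow_log_le_self 2 hx1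
    have h2 : (2:ℕ) ^ m (J m (Nat.log 2 x.1)) ≤ 2 ^ Nat.log 2 x.1 :=
      Nat.pow_le_pow_right (by norm_num) hmj
    omega
  · rw [← heq]; exact hx

omit hm

def fuseCond (hm : StrictMono m)
    (hcard : ∀ j, j ≤ (Set.Ico (2 ^ m j) (2 ^ (m j + 1)) \ (Prod.fst '' (r j).graph)).ncard) :
    VelCond where
  graph := fuse r m
  func := fun i j k hj hk => (r _).func hj.2 hk.2
  dom_eq_ran := by
    ext a
    simp only [Set.mem_image]
    constructor
    · rintro ⟨⟨x, y⟩, hxy, rfl⟩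
      exact ⟨(y, x), (fuse_invol r hxy).1, rfl⟩
    · rintro ⟨⟨x, y⟩, hxy, rfl⟩
      exact ⟨(y, x), (fuse_invol r hxy).1, rfl⟩
  blocks := fun i j h n => (r _).blocks h.2 n
  invol := fun i j h => fuse_invol r h
  growth := fuse_growth r hm hcard

end VelAux


/-- the partial order `(𝒫, ⊇*)` is σ-directed closed. -/
theorem velCond_sigma_directed_closed (D : Set VelCond) (hD : D.Countable)
    (hdir : ∀ q₁ ∈ D, ∀ q₂ ∈ D, ∃ r ∈ D, SupStar r q₁ ∧ SupStar r q₂) :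
    ∃ p : VelCond, ∀ q ∈ D, SupStar p q := by
  classical
  rcases D.eq_empty_or_nonempty with rfl | hne
  · refine ⟨⟨∅, by simp, by simp, by simp, by simp, ?_⟩, by simp⟩
    intro k
    refine (Set.Ici_infinite k).mono ?_
    intro n hn
    simp only [Set.mem_setOf_eq, Set.image_empty, Set.diff_empty, Set.mem_Ici] at hn ⊢
    rw [show (Set.Ico (2 ^ n) (2 ^ (n + 1)) : Set ℕ) = ↑(Finset.Ico (2 ^ n) (2 ^ (n + 1))) by
        simp, Set.ncard_coe_finset, Nat.card_Ico]
    have h1 := Nat.lt_two_pow_self (n := n)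
    have h2 : 2 ^ (n + 1) = 2 * 2 ^ n := by ring
    omega
  obtain ⟨f, rfl⟩ := hD.exists_eq_range hne
  have hfD : ∀ n, f n ∈ Set.range f := fun n => ⟨n, rfl⟩
  obtain ⟨R, hR0, hRs⟩ :
      ∃ R : ℕ → {x : VelCond // x ∈ Set.range f}, R 0 = ⟨f 0, hfD 0⟩ ∧
        ∀ n, SupStar (R (n + 1)).1 (R n).1 ∧ SupStar (R (n + 1)).1 (f (n + 1)) := by
    refine VelAux.exists_seq
      (P := fun n (a b : {x : VelCond // x ∈ Set.range f}) =>
        SupStar b.1 a.1 ∧ SupStar b.1 (f (n + 1))) ⟨f 0, hfD 0⟩ fun n a => ?_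
    obtain ⟨c, hcD, hc1, hc2⟩ := hdir a.1 a.2 (f (n + 1)) (hfD (n + 1))
    exact ⟨⟨c, hcD⟩, hc1, hc2⟩
  set r : ℕ → VelCond := fun n => (R n).1 with hr
  have hmono : ∀ j i, i ≤ j → SupStar (r j) (r i) := by
    intro j
    induction j with
    | zero => intro i hi; obtain rfl := Nat.le_zero.mp hi; exact VelAux.supStar_refl _
    | succ j ih =>
      intro i hi
      rcases eq_or_lt_of_le hi with rfl | h
      · exact VelAux.supStar_refl _
      · exact VelAux.supStar_trans (hRs j).1 (ih i (Nat.lt_succ_iff.mp h))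
  have hRf : ∀ n, SupStar (r n) (f n) := by
    intro n
    cases n with
    | zero =>
      have h0 : r 0 = f 0 := by rw [hr]; simp only [hR0]
      rw [h0]; exact VelAux.supStar_refl _
    | succ n => exact (hRs n).2
  have hstep : ∀ (j : ℕ) (prev : ℕ), ∃ nxt, prev < nxt ∧
      (j ≤ (Set.Ico (2 ^ nxt) (2 ^ (nxt + 1)) \ (Prod.fst '' (r j).graph)).ncard) ∧
      ∀ i < j, ∀ x ∈ (r i).graph \ (r j).graph, x.1 < 2 ^ nxt := by
    intro j prev
    have hS : (⋃ i ∈ Set.Iio j, ((r i).graph \ (r j).graph)).Finite :=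
      (Set.finite_Iio j).biUnion fun i hi => hmono j i (le_of_lt hi)
    obtain ⟨N, hN⟩ := (hS.image Prod.fst).bddAbove
    obtain ⟨nxt, hnxt_mem, hnxt_gt⟩ := ((r j).growth j).exists_gt (max prev N)
    refine ⟨nxt, lt_of_le_of_lt (le_max_left _ _) hnxt_gt, hnxt_mem, ?_⟩
    intro i hi x hx
    have hxN : x.1 ≤ N := hN ⟨x, Set.mem_biUnion hi hx, rfl⟩
    have h1 : x.1 < nxt := lt_of_le_of_lt (le_trans hxN (le_max_right _ _)) hnxt_gt
    have h2 := Nat.lt_two_pow_self (n := nxt)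
    omega
  obtain ⟨M, hM0, hMs⟩ :
      ∃ M : ℕ → ℕ, M 0 = 0 ∧ ∀ n, M n < M (n + 1) ∧
        ((n + 1) ≤ (Set.Ico (2 ^ M (n + 1)) (2 ^ (M (n + 1) + 1)) \
          (Prod.fst '' (r (n + 1)).graph)).ncard) ∧
        ∀ i < n + 1, ∀ x ∈ (r i).graph \ (r (n + 1)).graph, x.1 < 2 ^ M (n + 1) :=
    VelAux.exists_seq _ 0 fun n a => hstep (n + 1) a
  have hMmono : StrictMono M := strictMono_nat_of_lt_succ fun n => (hMs n).1
  have hcard : ∀ j, j ≤ (Set.Ico (2 ^ M j) (2 ^ (M j + 1)) \ (Prod.fst '' (r j).graph)).ncard := by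
    intro j
    cases j with
    | zero => exact Nat.zero_le _
    | succ j => exact (hMs j).2.1
  have hdiff : ∀ j, ∀ i < j, ∀ x ∈ (r i).graph \ (r j).graph, x.1 < 2 ^ M j := by
    intro j
    cases j with
    | zero => intro i hi; exact absurd hi (Nat.not_lt_zero i)
    | succ j => exact (hMs j).2.2
  refine ⟨VelAux.fuseCond r hMmono hcard, ?_⟩
  rintro q ⟨n, rfl⟩
  exact VelAux.supStar_trans (VelAux.supStar_fuse r hMmono hdiff n) (hRf n)
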